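/- Let G be a simple graph on n vertices with Laplacian matrix L, and let M be the maximum multiplicity of the eigenvalues of L, i.e., M = max over λ ∈ ℝ of dim{v ∈ ℝ^n : L·v = λ·v}. Then there exists a matrix B ∈ ℝ^{n×M} such that for every real number λ and every nonzero vector v ∈ ℝ^n with L·v = λ·v, one has Bᵀ·v ≠ 0. (By the PBH test, the Laplacian network ẋ = −Lx + Bu is controllable with M independent inputs; such a B can be obtained by summing appropriately padded groups of columns of a normalized modal matrix of L.) -/

import Mathlib

set_option maxHeartbeats 1000000

open Finset Matrix

/-- for a simple graph `G` on `n` vertices with Laplacian `L`, letting `M` be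
the maximum multiplicity of the eigenvalues of `L` (the largest dimension of an eigenspace),
there exists `B ∈ ℝ^{n×M}` such that every nonzero eigenvector `v` of `L` satisfies
`Bᵀ·v ≠ 0`; by the PBH test, the Laplacian network is controllable with `M` inputs. -/
theorem lapMatrix_controllable_with_max_multiplicity_inputs (n : ℕ)
    (G : SimpleGraph (Fin n)) [DecidableRel G.Adj] (M : ℕ)
    (hM : M = ⨆ lam : ℝ, Module.finrank ℝ
      ↥(Module.End.eigenspace (Matrix.toLin' (G.lapMatrix ℝ)) lam)) :
    ∃ B : Matrix (Fin n) (Fin M) ℝ, ∀ (lam : ℝ) (v : Fin n → ℝ), v ≠ 0 →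
      G.lapMatrix ℝ *ᵥ v = lam • v → Bᵀ *ᵥ v ≠ 0 := by
  classical
  have hL : (G.lapMatrix ℝ).IsHermitian := (SimpleGraph.posSemidef_lapMatrix ℝ G).1
  set u : Fin n → (Fin n → ℝ) := fun i => ⇑(hL.eigenvectorBasis i) with hu
  set μ : Fin n → ℝ := hL.eigenvalues with hμ
  have heig : ∀ i, G.lapMatrix ℝ *ᵥ u i = μ i • u i :=
    fun i => hL.mulVec_eigenvectorBasis i
  have hsymm : (G.lapMatrix ℝ)ᵀ = G.lapMatrix ℝ := (G.isSymm_lapMatrix ℝ)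
  -- orthogonality: eigenvectors for distinct eigenvalues
  have horth : ∀ (lam : ℝ) (v : Fin n → ℝ), G.lapMatrix ℝ *ᵥ v = lam • v →
      ∀ i, μ i ≠ lam → u i ⬝ᵥ v = 0 := by
    intro lam v hv i hne
    have h1 : (G.lapMatrix ℝ *ᵥ u i) ⬝ᵥ v = u i ⬝ᵥ (G.lapMatrix ℝ *ᵥ v) := by
      rw [dotProduct_mulVec, ← mulVec_transpose, hsymm]
    rw [heig i, hv, smul_dotProduct, dotProduct_smul, smul_eq_mul, smul_eq_mul] at h1
    have := sub_eq_zero.mpr h1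
    rw [← sub_mul] at this
    rcases mul_eq_zero.mp this with h | h
    · exact absurd (sub_eq_zero.mp h) hne
    · exact h
  -- inner product = dotProduct
  have hinner : ∀ (x : EuclideanSpace ℝ (Fin n)) (y : Fin n → ℝ),
      (inner ℝ x (WithLp.toLp 2 y) : ℝ) = (x : Fin n → ℝ) ⬝ᵥ y := by
    intro x y
    simp [PiLp.inner_apply, RCLike.inner_apply, dotProduct, mul_comm]
  -- completeness: nonzero eigenvector has nonzero coordinate on matching basis vec
  have hcompl : ∀ (lam : ℝ) (v : Fin n → ℝ), v ≠ 0 → G.lapMatrix ℝ *ᵥ v = lam • v →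
      ∃ i, μ i = lam ∧ u i ⬝ᵥ v ≠ 0 := by
    intro lam v hv0 hv
    by_contra h
    push_neg at h
    have hall : ∀ i, u i ⬝ᵥ v = 0 := by
      intro i
      by_cases hi : μ i = lam
      · exact h i hi
      · exact horth lam v hv i hi
    apply hv0
    have : (WithLp.toLp 2 v : EuclideanSpace ℝ (Fin n)) = 0 := by
      have hrepr : hL.eigenvectorBasis.repr (WithLp.toLp 2 v : EuclideanSpace ℝ (Fin n)) = 0 := by
        ext i
        rw [hL.eigenvectorBasis.repr_apply_apply]
        simpa [hinner] using hall i
      simpa using congrArg hL.eigenvectorBasis.repr.symm hrepr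
    simpa using congrArg WithLp.ofLp this
  -- multiplicity bound: each eigenvalue class has at most M indices
  have hbdd : BddAbove (Set.range fun lam : ℝ => Module.finrank ℝ
      ↥(Module.End.eigenspace (Matrix.toLin' (G.lapMatrix ℝ)) lam)) := by
    refine ⟨n, ?_⟩
    rintro _ ⟨lam, rfl⟩
    calc Module.finrank ℝ ↥(Module.End.eigenspace (Matrix.toLin' (G.lapMatrix ℝ)) lam)
        ≤ Module.finrank ℝ (Fin n → ℝ) := Submodule.finrank_le _
      _ = n := by simp
  have hcard : ∀ i₀ : Fin n, (univ.filter fun k => μ k = μ i₀).card ≤ M := by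
    intro i₀
    set S := univ.filter fun k => μ k = μ i₀ with hS
    set E := Module.End.eigenspace (Matrix.toLin' (G.lapMatrix ℝ)) (μ i₀) with hE
    have hmem : ∀ k : ↥S, u k ∈ E := by
      rintro ⟨k, hk⟩
      rw [hE, Module.End.mem_eigenspace_iff, Matrix.toLin'_apply]
      have : μ k = μ i₀ := by simpa [hS] using hk
      rw [heig k, this]
    have hli : LinearIndependent ℝ (fun k : ↥S => (⟨u k, hmem k⟩ : ↥E)) := by
      have h1 : LinearIndependent ℝ (fun k : ↥S =>
          (hL.eigenvectorBasis k : EuclideanSpace ℝ (Fin n))) :=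
        (hL.eigenvectorBasis.toBasis.linearIndependent.comp _ Subtype.val_injective)
      have h2 : LinearIndependent ℝ (fun k : ↥S => u k) :=
        h1.map' (WithLp.linearEquiv 2 ℝ (Fin n → ℝ)).toLinearMap (LinearEquiv.ker _)
      exact h2.of_comp (E.subtype)
    calc S.card = Fintype.card ↥S := (Fintype.card_coe S).symm
      _ ≤ Module.finrank ℝ ↥E := hli.fintype_card_le_finrank
      _ ≤ M := by rw [hM]; exact le_ciSup hbdd (μ i₀)
  -- injective numbering within each eigenvalue class
  set g : Fin n → ℕ := fun i => (univ.filter fun k => μ k = μ i ∧ k < i).card with hg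
  have hglt : ∀ i, g i < M := by
    intro i
    have hss : (univ.filter fun k => μ k = μ i ∧ k < i) ⊂
        (univ.filter fun k => μ k = μ i) := by
      refine Finset.ssubset_iff_of_subset ?_ |>.mpr ⟨i, by simp, by simp⟩
      intro k hk
      simp only [mem_filter, mem_univ, true_and] at hk ⊢
      exact hk.1
    exact lt_of_lt_of_le (Finset.card_lt_card hss) (hcard i)
  have hginj : ∀ i j, μ i = μ j → g i = g j → i = j := by
    have key : ∀ i j : Fin n, μ i = μ j → i < j → g i < g j := by
      intro i j hμij hij
      apply Finset.card_lt_card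
      refine Finset.ssubset_iff_of_subset ?_ |>.mpr
        ⟨i, by simp [hμij, hij], by simp⟩
      intro k hk
      simp only [mem_filter, mem_univ, true_and] at hk ⊢
      exact ⟨hk.1.trans hμij, hk.2.trans hij⟩
    intro i j hμij hgij
    rcases lt_trichotomy i j with h | h | h
    · exact absurd hgij (key i j hμij h).ne
    · exact h
    · exact absurd hgij.symm (key j i hμij.symm h).ne
  set gM : Fin n → Fin M := fun i => ⟨g i, hglt i⟩ with hgMdef
  -- the matrix B
  refine ⟨fun x j => ∑ i ∈ (univ.filter fun i => gM i = j), u i x, ?_⟩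
  intro lam v hv0 hv hBv
  obtain ⟨i₀, hi₀, hne⟩ := hcompl lam v hv0 hv
  apply hne
  have hj := congrFun hBv (gM i₀)
  simp only [Pi.zero_apply] at hj
  rw [← hj]
  have : (fun x j => ∑ i ∈ (univ.filter fun i => gM i = j), u i x)ᵀ *ᵥ v =
      fun j => ∑ i ∈ (univ.filter fun i => gM i = j), u i ⬝ᵥ v := by
    ext j
    simp only [mulVec, transpose_apply, dotProduct, Finset.sum_mul]
    simp only [transpose, of_apply, Finset.sum_mul]
    exact Finset.sum_comm
  rw [this]
  symm
  apply Finset.sum_eq_single i₀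
  · intro k hk hki₀
    simp only [mem_filter, mem_univ, true_and] at hk
    by_cases hμk : μ k = lam
    · exact absurd (hginj k i₀ (hμk.trans hi₀.symm) (by simpa [hgMdef, Fin.ext_iff] using hk))
        hki₀
    · exact horth lam v hv k hμk
  · intro h
    simp at h
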